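/- Let P be a finite set of points in the Euclidean plane ℝ², let L be a connected simple graph with vertex set P whose edge set contains every pair of distinct points at Euclidean distance at most 1, and let T be a spanning tree of L minimizing the total Euclidean length of its edges. Then for every real Π ≥ 1 and every axis-aligned square of side Π in the plane, the number of edges of T whose Euclidean length lies in the interval (1, Π] and which have at least one endpoint in the square is less than 9(2Π+1)². -/

import Mathlib

open Finset SimpleGraph

/-- The Euclidean length of an edge of a graph whose vertices are points of the plane. -/
noncomputable def edgeLen {P : Finset (EuclideanSpace ℝ (Fin 2))}
    (e : Sym2 (↑P : Type)) : ℝ :=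
  Sym2.lift ⟨fun (u v : {x // x ∈ P}) => dist u.1 v.1, fun _ _ => dist_comm _ _⟩ e

/-- The total Euclidean length of the edges of a graph on a finite set of planar points. -/
noncomputable def totalLen {P : Finset (EuclideanSpace ℝ (Fin 2))}
    (T : SimpleGraph (↑P : Type)) : ℝ :=
  ∑ᶠ e ∈ T.edgeSet, edgeLen e

/-- Membership in the closed axis-aligned square with lower-left corner `a` and side `t`. -/
def InSquare (a : EuclideanSpace ℝ (Fin 2)) (t : ℝ) (x : EuclideanSpace ℝ (Fin 2)) : Prop :=
  ∀ i, a i ≤ x i ∧ x i ≤ a i + t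

private lemma edgeLen_mk {P : Finset (EuclideanSpace ℝ (Fin 2))} (u v : (↑P : Type)) :
    edgeLen s(u, v) = dist u.1 v.1 := rfl

private lemma coord_le_dist (x y : EuclideanSpace ℝ (Fin 2)) (i : Fin 2) :
    |x i - y i| ≤ dist x y := by
  simp only [EuclideanSpace.dist_eq, Real.dist_eq]
  have h1 : |x i - y i| = Real.sqrt (|x i - y i|^2) := (Real.sqrt_sq (abs_nonneg _)).symm
  rw [h1]
  apply Real.sqrt_le_sqrt
  exact Finset.single_le_sum (f := fun j => |x j - y j|^2) (fun j _ => sq_nonneg _)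
    (Finset.mem_univ i)

private lemma dist_le_of_coords {x y : EuclideanSpace ℝ (Fin 2)} {c : ℝ}
    (h : ∀ i, |x i - y i| ≤ c) (hc : 0 ≤ c) : dist x y ≤ c * Real.sqrt 2 := by
  simp only [EuclideanSpace.dist_eq, Real.dist_eq]
  have : ∑ i : Fin 2, |x i - y i|^2 ≤ 2 * c^2 := by
    rw [Fin.sum_univ_two]
    have h0 := h 0; have h1 := h 1
    have e0 : |x 0 - y 0|^2 ≤ c^2 := by nlinarith [abs_nonneg (x 0 - y 0)]
    have e1 : |x 1 - y 1|^2 ≤ c^2 := by nlinarith [abs_nonneg (x 1 - y 1)]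
    linarith
  calc Real.sqrt (∑ i : Fin 2, |x i - y i|^2) ≤ Real.sqrt (2 * c^2) := Real.sqrt_le_sqrt this
    _ = c * Real.sqrt 2 := by
        rw [mul_comm, Real.sqrt_mul (by positivity), Real.sqrt_sq hc]

private lemma reach_cover_aux {V : Type} {G : SimpleGraph V} (u v : V) {z t : V}
    (w : G.Walk z t) :
    (G.deleteEdges {s(u,v)}).Reachable z t ∨
      ((G.deleteEdges {s(u,v)}).Reachable z u ∧ (G.deleteEdges {s(u,v)}).Reachable v t) ∨
      ((G.deleteEdges {s(u,v)}).Reachable z v ∧ (G.deleteEdges {s(u,v)}).Reachable u t) := by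
  induction w with
  | nil => exact Or.inl (Reachable.refl _)
  | @cons x y t h p ih =>
    by_cases hzz : s(x, y) = s(u, v)
    · rw [Sym2.eq_iff] at hzz
      rcases hzz with ⟨rfl, rfl⟩ | ⟨rfl, rfl⟩
      · rcases ih with h1 | ⟨h1, h2⟩ | ⟨h1, h2⟩
        · exact Or.inr (Or.inl ⟨Reachable.refl _, h1⟩)
        · exact Or.inr (Or.inl ⟨Reachable.refl _, h2⟩)
        · exact Or.inl h2
      · rcases ih with h1 | ⟨h1, h2⟩ | ⟨h1, h2⟩
        · exact Or.inr (Or.inr ⟨Reachable.refl _, h1⟩)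
        · exact Or.inl h2
        · exact Or.inr (Or.inr ⟨Reachable.refl _, h2⟩)
    · have hadj : (G.deleteEdges {s(u,v)}).Adj x y := by simp [h, hzz]
      rcases ih with h1 | ⟨h1, h2⟩ | ⟨h1, h2⟩
      · exact Or.inl (hadj.reachable.trans h1)
      · exact Or.inr (Or.inl ⟨hadj.reachable.trans h1, h2⟩)
      · exact Or.inr (Or.inr ⟨hadj.reachable.trans h1, h2⟩)

private lemma reach_cover {V : Type} {G : SimpleGraph V} (hG : G.Connected) (u v z : V) :
    (G.deleteEdges {s(u,v)}).Reachable z u ∨ (G.deleteEdges {s(u,v)}).Reachable z v := by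
  obtain ⟨w⟩ := hG.preconnected z u
  rcases reach_cover_aux u v w with h | ⟨h1, _⟩ | ⟨h1, h2⟩
  · exact Or.inl h
  · exact Or.inl h1
  · exact Or.inr h1

private lemma swap_contra {P : Finset (EuclideanSpace ℝ (Fin 2))}
    {L T : SimpleGraph (↑P : Type)}
    (hfull : ∀ u v : (↑P : Type), u ≠ v → dist u.1 v.1 ≤ 1 → L.Adj u v)
    (hTle : T ≤ L) (hT : T.IsTree)
    (hmin : ∀ T' : SimpleGraph (↑P : Type), T' ≤ L → T'.IsTree → totalLen T ≤ totalLen T')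
    {e : Sym2 (↑P : Type)} (he : e ∈ T.edgeSet) (hlen : 1 < edgeLen e)
    {p q : (↑P : Type)}
    (hcov : ∀ z, (T.deleteEdges {e}).Reachable z p ∨ (T.deleteEdges {e}).Reachable z q)
    (hnr : ¬ (T.deleteEdges {e}).Reachable p q) (hd : dist p.1 q.1 ≤ 1) : False := by
  classical
  have hpq : p ≠ q := fun h => hnr (h ▸ Reachable.refl p)
  have hLadj : L.Adj p q := hfull p q hpq hd
  set D := T.deleteEdges {e} with hD
  set T' : SimpleGraph (↑P : Type) := D ⊔ fromEdgeSet {s(p,q)} with hT'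
  have hne : s(p,q) ≠ e := by
    intro h
    rw [← h, edgeLen_mk] at hlen
    linarith
  have hxyT : s(p,q) ∉ T.edgeSet := by
    intro h
    exact hnr (Adj.reachable (by simp [hD, deleteEdges_adj, hne, (mem_edgeSet _).mp h]))
  have hDleT' : D ≤ T' := le_sup_left
  have hadjT' : T'.Adj p q := by
    apply le_sup_right (b := fromEdgeSet {s(p,q)})
    rw [fromEdgeSet_adj]
    exact ⟨rfl, hpq⟩
  have hT'le : T' ≤ L := by
    apply sup_le ((deleteEdges_le _).trans hTle)
    intro a b hab
    rw [fromEdgeSet_adj, Set.mem_singleton_iff, Sym2.eq_iff] at hab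
    rcases hab.1 with ⟨rfl, rfl⟩ | ⟨rfl, rfl⟩
    · exact hLadj
    · exact hLadj.symm
  have hconn : T'.Connected := by
    rw [connected_iff]
    refine ⟨fun z z' => ?_, ⟨p⟩⟩
    have key : ∀ z : (↑P : Type), T'.Reachable z p := by
      intro z
      rcases hcov z with h | h
      · exact h.mono hDleT'
      · exact (h.mono hDleT').trans hadjT'.symm.reachable
    exact (key z).trans (key z').symm
  have hacy : T'.IsAcyclic := by
    intro u c hc
    by_cases hm : s(p,q) ∈ c.edges
    · have := adj_and_reachable_delete_edges_iff_exists_cycle.mpr ⟨u, c, hc, hm⟩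
      refine hnr ?_
      refine (this.2.mono ?_)
      intro a b hab
      simp only [deleteEdges_adj, Set.mem_singleton_iff] at hab
      obtain ⟨h1, h2⟩ := hab
      rcases (sup_adj _ _ _ _).mp h1 with h3 | h3
      · exact h3
      · exact absurd ((fromEdgeSet_adj _).mp h3).1 h2
    · have hedges : ∀ ed ∈ c.edges, ed ∈ T.edgeSet := by
        intro ed hed
        have := c.edges_subset_edgeSet hed
        rw [hT', edgeSet_sup] at this
        rcases this with h1 | h1
        · exact ((edgeSet_deleteEdges _).subset h1 : _).1
        · rw [edgeSet_fromEdgeSet] at h1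
          exact absurd (h1.1 : ed ∈ ({s(p,q)} : Set _)) (by rintro rfl; exact hm hed)
      exact hT.IsAcyclic (c.transfer T hedges) (hc.transfer hedges)
  have hfin1 : (T.edgeSet \ {e}).Finite := Set.toFinite _
  have hlenT : totalLen T = (∑ᶠ x ∈ T.edgeSet \ {e}, edgeLen x) + edgeLen e := by
    rw [totalLen]
    conv_lhs => rw [← Set.diff_union_of_subset (show {e} ⊆ T.edgeSet by simpa using he)]
    rw [finsum_mem_union (Set.disjoint_sdiff_left) hfin1 (Set.finite_singleton _),
      finsum_mem_singleton]
  have hT'edge : T'.edgeSet = (T.edgeSet \ {e}) ∪ {s(p,q)} := by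
    rw [hT', edgeSet_sup, hD, edgeSet_deleteEdges, edgeSet_fromEdgeSet]
    congr 1
    rw [sdiff_eq_left, Set.disjoint_singleton_left]
    simp [hpq]
  have hlenT' : totalLen T' = (∑ᶠ x ∈ T.edgeSet \ {e}, edgeLen x) + dist p.1 q.1 := by
    rw [totalLen, hT'edge, finsum_mem_union ?_ hfin1 (Set.finite_singleton _),
      finsum_mem_singleton, edgeLen_mk]
    rw [Set.disjoint_singleton_right]
    exact fun h => hxyT h.1
  have := hmin T' hT'le ⟨hconn, hacy⟩
  rw [hlenT, hlenT'] at this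
  linarith

private lemma no_close_pair {P : Finset (EuclideanSpace ℝ (Fin 2))}
    {L T : SimpleGraph (↑P : Type)}
    (hfull : ∀ u v : (↑P : Type), u ≠ v → dist u.1 v.1 ≤ 1 → L.Adj u v)
    (hTle : T ≤ L) (hT : T.IsTree)
    (hmin : ∀ T' : SimpleGraph (↑P : Type), T' ≤ L → T'.IsTree → totalLen T ≤ totalLen T')
    {x1 z1 x2 z2 r : (↑P : Type)}
    (he1 : s(x1,z1) ∈ T.edgeSet) (hl1 : 1 < edgeLen s(x1,z1))
    (he2 : s(x2,z2) ∈ T.edgeSet) (hl2 : 1 < edgeLen s(x2,z2))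
    (hnee : s(x1,z1) ≠ s(x2,z2))
    (hr1 : ¬ (T.deleteEdges {s(x1,z1)}).Reachable r x1)
    (hr2 : ¬ (T.deleteEdges {s(x2,z2)}).Reachable r x2)
    (hd : dist x1.1 x2.1 ≤ 1) : False := by
  classical
  have hcov1 := reach_cover (G := T) hT.isConnected x1 z1
  have hcov2 := reach_cover (G := T) hT.isConnected x2 z2
  have hrz1 : (T.deleteEdges {s(x1,z1)}).Reachable r z1 := (hcov1 r).resolve_left hr1
  have hrz2 : (T.deleteEdges {s(x2,z2)}).Reachable r z2 := (hcov2 r).resolve_left hr2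
  by_cases hA : (T.deleteEdges {s(x1,z1)}).Reachable r x2
  · have hcov : ∀ z, (T.deleteEdges {s(x1,z1)}).Reachable z x1 ∨
        (T.deleteEdges {s(x1,z1)}).Reachable z x2 := by
      intro z
      rcases hcov1 z with h | h
      · exact Or.inl h
      · exact Or.inr (h.trans (hrz1.symm.trans hA))
    have hnr : ¬ (T.deleteEdges {s(x1,z1)}).Reachable x1 x2 := fun h => hr1 (hA.trans h.symm)
    exact swap_contra hfull hTle hT hmin he1 hl1 hcov hnr hd
  · by_cases hB : (T.deleteEdges {s(x2,z2)}).Reachable r x1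
    · have hcov : ∀ z, (T.deleteEdges {s(x2,z2)}).Reachable z x2 ∨
          (T.deleteEdges {s(x2,z2)}).Reachable z x1 := by
        intro z
        rcases hcov2 z with h | h
        · exact Or.inl h
        · exact Or.inr (h.trans (hrz2.symm.trans hB))
      have hnr : ¬ (T.deleteEdges {s(x2,z2)}).Reachable x2 x1 := fun h => hr2 (hB.trans h.symm)
      exact swap_contra hfull hTle hT hmin he2 hl2 hcov hnr (by rw [_root_.dist_comm]; exact hd)
    · obtain ⟨q2⟩ := hrz2
      by_cases hm : s(x1,z1) ∈ q2.edges
      · exact hB ⟨q2.takeUntil x1 (q2.fst_mem_support_of_mem_edges hm)⟩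
      · have hedges : ∀ ed ∈ q2.edges, ed ∈ (T.deleteEdges {s(x1,z1)}).edgeSet := by
          intro ed hed
          have h1 := q2.edges_subset_edgeSet hed
          rw [edgeSet_deleteEdges] at h1 ⊢
          refine ⟨h1.1, ?_⟩
          rw [Set.mem_singleton_iff]
          rintro rfl
          exact hm hed
        have hreach : (T.deleteEdges {s(x1,z1)}).Reachable r z2 :=
          ⟨q2.transfer _ hedges⟩
        have hadj : (T.deleteEdges {s(x1,z1)}).Adj x2 z2 := by
          rw [← mem_edgeSet, edgeSet_deleteEdges]
          exact ⟨he2, by rw [Set.mem_singleton_iff]; exact fun h => hnee h.symm⟩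
        exact hA (hreach.trans hadj.reachable.symm)

/-- If `L` contains all pairs of distinct points at distance at most `1` and `T` is a minimum
spanning tree of `L`, then for every `Q ≥ 1`, every axis-aligned square of side `Q` hits fewer
than `9(2Q+1)²` edges of `T` of length in `(1, Q]`. -/
theorem mst_medium_links_sparse (P : Finset (EuclideanSpace ℝ (Fin 2)))
    (L : SimpleGraph (↑P : Type)) (hL : L.Connected)
    (hfull : ∀ u v : (↑P : Type), u ≠ v → dist u.1 v.1 ≤ 1 → L.Adj u v)
    (T : SimpleGraph (↑P : Type)) (hTle : T ≤ L) (hT : T.IsTree)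
    (hmin : ∀ T' : SimpleGraph (↑P : Type), T' ≤ L → T'.IsTree → totalLen T ≤ totalLen T')
    (Q : ℝ) (hQ : 1 ≤ Q) (a : EuclideanSpace ℝ (Fin 2)) :
    ({e ∈ T.edgeSet | 1 < edgeLen e ∧ edgeLen e ≤ Q ∧
        ∃ u v : (↑P : Type), e = s(u, v) ∧ (InSquare a Q u.1 ∨ InSquare a Q v.1)}.ncard : ℝ)
      < 9 * (2 * Q + 1) ^ 2 := by
  classical
  have hQ0 : (0:ℝ) ≤ Q := le_trans zero_le_one hQ
  have hnonempty : Nonempty (↑P : Type) := hL.nonempty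
  obtain ⟨r⟩ := hnonempty
  haveI : Nonempty (↑P : Type) := ⟨r⟩
  set E : Set (Sym2 (↑P : Type)) := {e ∈ T.edgeSet | 1 < edgeLen e ∧ edgeLen e ≤ Q ∧
      ∃ u v : (↑P : Type), e = s(u, v) ∧ (InSquare a Q u.1 ∨ InSquare a Q v.1)} with hE
  have hex : ∀ e ∈ E, ∃ x : (↑P : Type), (∃ z, e = s(x, z)) ∧
      ¬ (T.deleteEdges {e}).Reachable r x ∧
      (∀ i, a i - Q ≤ x.1 i ∧ x.1 i ≤ a i + 2*Q) := by
    intro e he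
    obtain ⟨heT, hl1, hlQ, u, v, hesv, hsq⟩ := he
    subst hesv
    have hdist : dist u.1 v.1 ≤ Q := by rwa [edgeLen_mk] at hlQ
    have hbridge : ¬ (T.deleteEdges {s(u,v)}).Reachable u v := by
      have hb := isAcyclic_iff_forall_edge_isBridge.mp hT.IsAcyclic heT
      rw [isBridge_iff] at hb
      exact hb
    have hbounds : ∀ i, (a i - Q ≤ u.1 i ∧ u.1 i ≤ a i + 2*Q) ∧
        (a i - Q ≤ v.1 i ∧ v.1 i ≤ a i + 2*Q) := by
      intro i
      have hco := coord_le_dist u.1 v.1 i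
      rcases hsq with h | h
      · have h1 := h i
        have h2 : |u.1 i - v.1 i| ≤ Q := le_trans hco hdist
        rw [abs_le] at h2
        exact ⟨⟨by linarith [h1.1], by linarith [h1.2]⟩,
          ⟨by linarith [h1.1, h2.2], by linarith [h1.2, h2.1]⟩⟩
      · have h1 := h i
        have h2 : |u.1 i - v.1 i| ≤ Q := le_trans hco hdist
        rw [abs_le] at h2
        exact ⟨⟨by linarith [h1.1, h2.1], by linarith [h1.2, h2.2]⟩,
          ⟨by linarith [h1.1], by linarith [h1.2]⟩⟩
    rcases reach_cover (G := T) hT.isConnected u v r with hru | hrv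
    · refine ⟨v, ⟨u, Sym2.eq_swap.symm⟩, ?_, fun i => (hbounds i).2⟩
      intro hrvv
      exact hbridge (hru.symm.trans hrvv)
    · refine ⟨u, ⟨v, rfl⟩, ?_, fun i => (hbounds i).1⟩
      intro hruu
      exact hbridge (hruu.symm.trans hrv)
  choose! w hw1 hw2 hw3 using hex
  have key : ∀ e1 ∈ E, ∀ e2 ∈ E, e1 ≠ e2 → ¬ (dist (w e1).1 (w e2).1 ≤ 1) := by
    intro e1 he1 e2 he2 hne12 hdle
    obtain ⟨z1, hz1⟩ := hw1 e1 he1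
    obtain ⟨z2, hz2⟩ := hw1 e2 he2
    refine no_close_pair hfull hTle hT hmin (x1 := w e1) (z1 := z1) (x2 := w e2) (z2 := z2)
      (r := r) ?_ ?_ ?_ ?_ ?_ ?_ ?_ hdle
    · rw [← hz1]; exact he1.1
    · rw [← hz1]; exact he1.2.1
    · rw [← hz2]; exact he2.1
    · rw [← hz2]; exact he2.2.1
    · rw [← hz1, ← hz2]; exact hne12
    · rw [← hz1]; exact hw2 e1 he1
    · rw [← hz2]; exact hw2 e2 he2
  -- counting via a grid of side 1/2
  set m : ℤ := ⌊6*Q⌋ with hm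
  have hm0 : (0:ℤ) ≤ m := Int.le_floor.mpr (by push_cast; linarith)
  set g : Sym2 (↑P : Type) → ℤ × ℤ := fun e =>
    (⌊2*((w e).1 0 - (a 0 - Q))⌋, ⌊2*((w e).1 1 - (a 1 - Q))⌋) with hg
  have hmaps : ∀ e ∈ E, g e ∈ (↑(Finset.Icc (0:ℤ) m ×ˢ Finset.Icc (0:ℤ) m) : Set (ℤ × ℤ)) := by
    intro e he
    have hb0 := hw3 e he 0
    have hb1 := hw3 e he 1
    simp only [Finset.coe_product, Set.mem_prod, Finset.mem_coe, Finset.mem_Icc, hg]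
    refine ⟨⟨Int.floor_nonneg.mpr (by linarith [hb0.1]), ?_⟩,
      ⟨Int.floor_nonneg.mpr (by linarith [hb1.1]), ?_⟩⟩
    · exact Int.floor_le_floor (by linarith [hb0.2])
    · exact Int.floor_le_floor (by linarith [hb1.2])
  have hinj : Set.InjOn g E := by
    intro e1 he1 e2 he2 hgeq
    by_contra hne12
    apply key e1 he1 e2 he2 hne12
    have hc : ∀ i : Fin 2, |(w e1).1 i - (w e2).1 i| ≤ 1/2 := by
      intro i
      have hfl : (⌊2*((w e1).1 i - (a i - Q))⌋ : ℤ) = ⌊2*((w e2).1 i - (a i - Q))⌋ := by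
        fin_cases i
        · exact congrArg Prod.fst hgeq
        · exact congrArg Prod.snd hgeq
      set A := 2*((w e1).1 i - (a i - Q)) with hA
      set B := 2*((w e2).1 i - (a i - Q)) with hB
      have l1 := Int.floor_le A
      have l2 := Int.floor_le B
      have l3 := Int.lt_floor_add_one A
      have l4 := Int.lt_floor_add_one B
      have hfl' : ((⌊A⌋ : ℤ) : ℝ) = ((⌊B⌋ : ℤ) : ℝ) := by exact_mod_cast hfl
      rw [abs_le]
      constructor <;> nlinarith
    have hd2 := dist_le_of_coords hc (by norm_num)
    have hsq2 : Real.sqrt 2 ≤ 2 := by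
      nlinarith [Real.sq_sqrt (by norm_num : (0:ℝ) ≤ 2), Real.sqrt_nonneg 2]
    nlinarith [Real.sqrt_nonneg 2]
  have hcard := Set.ncard_le_ncard_of_injOn g hmaps hinj (Finset.finite_toSet _)
  rw [Set.ncard_coe_finset, Finset.card_product, Int.card_Icc] at hcard
  have hmQ : (m : ℝ) ≤ 6*Q := Int.floor_le _
  have htn : (((m + 1 - 0).toNat : ℤ) : ℝ) = (m : ℝ) + 1 := by
    rw [Int.toNat_of_nonneg (by omega)]
    push_cast; ring
  have hcast : (E.ncard : ℝ) ≤ ((m:ℝ) + 1) * ((m:ℝ) + 1) := by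
    have := hcard
    have h2 : (E.ncard : ℝ) ≤ ((m + 1 - 0).toNat * (m + 1 - 0).toNat : ℕ) := by
      exact_mod_cast this
    rw [Nat.cast_mul] at h2
    calc (E.ncard : ℝ) ≤ _ := h2
      _ = ((m:ℝ) + 1) * ((m:ℝ) + 1) := by
          rw [show (((m + 1 - 0).toNat : ℕ) : ℝ) = (((m + 1 - 0).toNat : ℤ) : ℝ) by push_cast; ring,
            htn]
  have hm0' : (0:ℝ) ≤ (m:ℝ) := by exact_mod_cast hm0
  have : (E.ncard : ℝ) ≤ (6*Q + 1) * (6*Q + 1) := by nlinarith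
  nlinarith [hQ]
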